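/- Let G be a finite abelian group with dual Ĝ, and let S ⊆ G and T ⊆ Ĝ be nonempty subsets satisfying: for every function f : G → ℂ, (1/|S|^{3/2}) ∑_{v,v' ∈ S} f(v - v') = (1/|T|^{3/2}) ∑_{w,w' ∈ T} f̂(w - w'), where f̂(y) = (1/√|G|) ∑_{x ∈ G} f(x) · y(-x). Then |S| · |T| = |G|. -/

import Mathlib

noncomputable def fourierTransform {G : Type*} [AddCommGroup G] [Fintype G]
    (f : G → ℂ) (y : AddChar G ℂ) : ℂ :=
  ((Real.sqrt (Fintype.card G) : ℂ))⁻¹ * ∑ x : G, f x * y (-x)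

theorem stmt_1 {G : Type*} [AddCommGroup G] [Fintype G]
    (S : Finset G) (T : Finset (AddChar G ℂ))
    (hS : S.Nonempty) (hT : T.Nonempty)
    (h : ∀ f : G → ℂ,
      (((S.card : ℝ) ^ ((3 : ℝ) / 2) : ℝ) : ℂ)⁻¹ * ∑ v ∈ S, ∑ v' ∈ S, f (v - v') =
      (((T.card : ℝ) ^ ((3 : ℝ) / 2) : ℝ) : ℂ)⁻¹ *
        ∑ w ∈ T, ∑ w' ∈ T, fourierTransform f (w - w')) :
    S.card * T.card = Fintype.card G := by
  classical
  set f : G → ℂ := fun x => if x = 0 then 1 else 0 with hf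
  have key := h f
  have hL : ∑ v ∈ S, ∑ v' ∈ S, f (v - v') = (S.card : ℂ) := by
    have h1 : ∀ v ∈ S, ∑ v' ∈ S, f (v - v') = 1 := by
      intro v hv
      have h2 : ∑ v' ∈ S, f (v - v') = ∑ v' ∈ S, if v' = v then 1 else 0 := by
        apply Finset.sum_congr rfl
        intro v' _
        simp [hf, sub_eq_zero, eq_comm]
      rw [h2, Finset.sum_ite_eq' S v (fun _ => (1:ℂ))]
      simp [hv]
    rw [Finset.sum_congr rfl h1]
    simp
  have hFT : ∀ y : AddChar G ℂ, fourierTransform f y = ((Real.sqrt (Fintype.card G) : ℂ))⁻¹ := by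
    intro y
    unfold fourierTransform
    have h3 : ∑ x : G, f x * y (-x) = 1 := by
      rw [Finset.sum_eq_single 0]
      · simp [hf]
      · intro b _ hb; simp [hf, hb]
      · simp
    rw [h3, mul_one]
  have hR : ∑ w ∈ T, ∑ w' ∈ T, fourierTransform f (w - w')
      = (T.card : ℂ)^2 * ((Real.sqrt (Fintype.card G) : ℂ))⁻¹ := by
    simp [hFT, Finset.sum_const]
    ring
  rw [hL, hR] at key
  have keyR : ((S.card : ℝ) ^ ((3:ℝ)/2))⁻¹ * (S.card : ℝ) =
      ((T.card : ℝ) ^ ((3:ℝ)/2))⁻¹ * ((T.card : ℝ)^2 * (Real.sqrt (Fintype.card G : ℝ))⁻¹) := by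
    exact_mod_cast key
  set a : ℝ := (S.card : ℝ) with ha'
  set b : ℝ := (T.card : ℝ) with hb'
  set c : ℝ := (Fintype.card G : ℝ) with hc'
  have ha : 0 < a := by
    rw [ha']; exact_mod_cast Finset.card_pos.mpr hS
  have hb : 0 < b := by
    rw [hb']; exact_mod_cast Finset.card_pos.mpr hT
  have hc : 0 < c := by
    rw [hc']; exact_mod_cast Fintype.card_pos
  -- square both sides
  have key2 := congrArg (· ^ (2:ℕ)) keyR
  simp only [mul_pow, inv_pow] at key2
  rw [← Real.rpow_natCast (a ^ ((3:ℝ)/2)) 2, ← Real.rpow_mul ha.le,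
      ← Real.rpow_natCast (b ^ ((3:ℝ)/2)) 2, ← Real.rpow_mul hb.le,
      Real.sq_sqrt hc.le] at key2
  norm_num at key2
  -- key2 : (a^3)⁻¹ * a^2 = (b^3)⁻¹ * (b^4 * c⁻¹)  (or similar)
  have hab : a * b = c := by
    field_simp at key2
    have h5 : a^2*b^3*c = a^2*b^3*(a*b) := by linear_combination (a^2*b^3) * key2
    have h6 : a^2*b^3 ≠ 0 := by positivity
    exact (mul_left_cancel₀ h6 h5).symm
  have : ((S.card * T.card : ℕ) : ℝ) = ((Fintype.card G : ℕ) : ℝ) := by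
    push_cast; rw [← ha', ← hb', ← hc']; exact hab
  exact_mod_cast this
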